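/- Let X, Y be subsets of the positive integers and n ≥ 1 an integer with n+1 ∈ X. Then for all k ≥ 0, D_{n+1,k}^{X,Y} = (y_n − (k−1)) · D_{n,k−1}^{X,Y} + (n+1 − (y_n − k)) · D_{n,k}^{X,Y}, where the term with D_{n,k−1}^{X,Y} is omitted when k = 0. -/

import Mathlib

attribute [local instance 10] Classical.propDecidable
set_option maxHeartbeats 1000000

/-- `cnt X n` is `|X ∩ [n]|` where `[n] = {1, ..., n}`. -/
noncomputable def cnt (X : Set ℕ) (n : ℕ) : ℕ := (X ∩ Set.Icc 1 n).ncard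

/-- `des_{X,Y}(σ)`: number of `i` with `σ_i > σ_{i+1}`, `σ_i ∈ X` and `σ_{i+1} ∈ Y`
(positions and values of `Fin n` are identified with `{1, ..., n}` via `i ↦ i + 1`). -/
noncomputable def desCount (X Y : Set ℕ) (n : ℕ) (σ : Equiv.Perm (Fin n)) : ℕ :=
  {i : Fin n | ∃ h : (i : ℕ) + 1 < n,
    (σ ⟨(i : ℕ) + 1, h⟩ : ℕ) < (σ i : ℕ) ∧
    ((σ i : ℕ) + 1) ∈ X ∧ ((σ ⟨(i : ℕ) + 1, h⟩ : ℕ) + 1) ∈ Y}.ncard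

/-- `D_{n,s}^{X,Y}`: the number of permutations of `[n]` with exactly `s`
`(X,Y)`-descents. -/
noncomputable def D (X Y : Set ℕ) (n s : ℕ) : ℕ :=
  Nat.card {σ : Equiv.Perm (Fin n) | desCount X Y n σ = s}

section aux
variable (X Y : Set ℕ) (n : ℕ)

/-- the descent predicate -/
def dpred (σ : Equiv.Perm (Fin n)) (i : Fin n) : Prop :=
  ∃ h : (i : ℕ) + 1 < n,
    (σ ⟨(i : ℕ) + 1, h⟩ : ℕ) < (σ i : ℕ) ∧
    ((σ i : ℕ) + 1) ∈ X ∧ ((σ ⟨(i : ℕ) + 1, h⟩ : ℕ) + 1) ∈ Y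

lemma desCount_eq_card (σ : Equiv.Perm (Fin n)) [DecidablePred (dpred X Y n σ)] :
    desCount X Y n σ = (Finset.univ.filter (dpred X Y n σ)).card := by
  classical
  rw [desCount, ← Nat.card_coe_set_eq, Nat.card_eq_fintype_card]
  convert Fintype.card_subtype (p := dpred X Y n σ) using 2
  rfl

/-- insert the value `last n` at position `p` -/
def ins (σ : Equiv.Perm (Fin n)) (p : Fin (n + 1)) : Equiv.Perm (Fin (n + 1)) :=
  (finSuccEquiv' p).trans ((σ.optionCongr).trans (finSuccEquiv' (Fin.last n)).symm)

lemma ins_self (σ : Equiv.Perm (Fin n)) (p : Fin (n + 1)) : ins n σ p p = Fin.last n := by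
  simp [ins, finSuccEquiv'_at, finSuccEquiv'_symm_none]

lemma ins_succAbove (σ : Equiv.Perm (Fin n)) (p : Fin (n + 1)) (j : Fin n) :
    ins n σ p (p.succAbove j) = (σ j).castSucc := by
  simp [ins, finSuccEquiv'_succAbove, finSuccEquiv'_symm_some]

lemma ins_apply_lt (σ : Equiv.Perm (Fin n)) (p : Fin (n + 1)) (m : Fin (n + 1))
    (hm : (m : ℕ) < (p : ℕ)) (hmn : (m : ℕ) < n) :
    ins n σ p m = (σ ⟨m, hmn⟩).castSucc := by
  have h1 : Fin.castSucc (⟨m, hmn⟩ : Fin n) = m := by ext; simp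
  conv_lhs => rw [← h1, ← Fin.succAbove_of_castSucc_lt p _ (by rw [Fin.lt_def, h1]; exact hm)]
  exact ins_succAbove n σ p _

lemma ins_apply_gt (σ : Equiv.Perm (Fin n)) (p : Fin (n + 1)) (m : Fin (n + 1))
    (hm : (p : ℕ) < (m : ℕ)) :
    ins n σ p m = (σ ⟨(m : ℕ) - 1, by have := m.isLt; omega⟩).castSucc := by
  set j : Fin n := ⟨(m : ℕ) - 1, by have := m.isLt; omega⟩ with hj
  have h1 : Fin.succ j = m := by ext; simp [hj]; omega
  conv_lhs => rw [← h1, ← Fin.succAbove_of_le_castSucc p _ (by rw [Fin.le_def]; simp [hj]; omega)]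
  exact ins_succAbove n σ p _

lemma ins_injective :
    Function.Injective (fun x : Fin (n + 1) × Equiv.Perm (Fin n) => ins n x.2 x.1) := by
  rintro ⟨p, σ⟩ ⟨q, ρ⟩ hpq
  simp only at hpq
  have hpq' : ∀ m, ins n σ p m = ins n ρ q m := fun m => by rw [hpq]
  have hp : p = q := by
    by_contra hne
    obtain ⟨j, hj⟩ := Fin.exists_succAbove_eq hne
    have h2 := hpq' p
    rw [ins_self] at h2
    rw [← hj, ins_succAbove] at h2
    exact absurd h2.symm (Fin.ne_last_of_lt (Fin.castSucc_lt_last _))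
  subst hp
  have hσ : σ = ρ := by
    ext j
    have := hpq' (p.succAbove j)
    rw [ins_succAbove, ins_succAbove] at this
    exact Fin.castSucc_injective _ this ▸ rfl
  simp [hσ]

noncomputable def insEquiv : Fin (n + 1) × Equiv.Perm (Fin n) ≃ Equiv.Perm (Fin (n + 1)) :=
  Equiv.ofBijective (fun x : Fin (n + 1) × Equiv.Perm (Fin n) => ins n x.2 x.1)
    ((Fintype.bijective_iff_injective_and_card _).2
    ⟨ins_injective (n := n), by simp [Fintype.card_perm, Nat.factorial_succ]⟩)

/-- insertion at `castSucc j` increases the descent count -/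
def incP (σ : Equiv.Perm (Fin n)) (j : Fin n) : Prop :=
  ((σ j : ℕ) + 1 ∈ Y) ∧ ∀ _ : 1 ≤ (j : ℕ),
    ¬ ((σ j : ℕ) < (σ ⟨(j : ℕ) - 1, lt_of_le_of_lt (Nat.sub_le _ _) j.isLt⟩ : ℕ) ∧
      ((σ ⟨(j : ℕ) - 1, lt_of_le_of_lt (Nat.sub_le _ _) j.isLt⟩ : ℕ) + 1) ∈ X)

def inc (σ : Equiv.Perm (Fin n)) (p : Fin (n + 1)) : Prop :=
  ∃ h : (p : ℕ) < n, incP X Y n σ ⟨p, h⟩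

lemma desCount_ins (hX1 : n + 1 ∈ X) (σ : Equiv.Perm (Fin n)) (p : Fin (n + 1)) :
    desCount X Y (n + 1) (ins n σ p) =
      desCount X Y n σ + (if inc X Y n σ p then 1 else 0) := by
  classical
  rw [desCount_eq_card, desCount_eq_card]
  set τ := ins n σ p with hτ
  have hpn : (p : ℕ) ≤ n := Nat.lt_succ_iff.mp p.isLt
  have hvlt : ∀ (m : Fin (n + 1)) (hm : (m : ℕ) < (p : ℕ)),
      (τ m : ℕ) = (σ ⟨m, by omega⟩ : ℕ) := by
    intro m hm
    rw [hτ, ins_apply_lt n σ p m hm (by omega)]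
    simp
  have hvgt : ∀ (m : Fin (n + 1)) (hm : (p : ℕ) < (m : ℕ)),
      (τ m : ℕ) = (σ ⟨(m : ℕ) - 1, by have := m.isLt; omega⟩ : ℕ) := by
    intro m hm
    rw [hτ, ins_apply_gt n σ p m hm]; simp
  have hvp : ∀ (m : Fin (n + 1)) (_ : (m : ℕ) = (p : ℕ)), (τ m : ℕ) = n := by
    intro m hm
    have : m = p := Fin.ext hm
    rw [this, hτ, ins_self]; simp
  have hσlt : ∀ j : Fin n, (σ j : ℕ) < n := fun j => (σ j).isLt
  have ecg : ∀ (a b : ℕ) (ha : a < n) (hb : b < n), a = b →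
      (σ ⟨a, ha⟩ : ℕ) = (σ ⟨b, hb⟩ : ℕ) := by rintro a b ha hb rfl; rfl
  set φ : Fin n → Fin (n + 1) := fun j =>
    if (j : ℕ) + 1 < (p : ℕ) then j.castSucc else j.succ with hφ
  have hφval : ∀ j : Fin n,
      (φ j : ℕ) = if (j : ℕ) + 1 < (p : ℕ) then (j : ℕ) else (j : ℕ) + 1 := by
    intro j; simp only [hφ]; split_ifs <;> simp
  have hφinj : Function.Injective φ := by
    intro a b hab
    have h2 := congrArg Fin.val hab
    rw [hφval, hφval] at h2
    split_ifs at h2 <;> (ext; omega)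
  have hmem : ∀ i : Fin (n + 1),
      i ∈ (if inc X Y n σ p then ({p} : Finset (Fin (n + 1))) else ∅) ↔
        inc X Y n σ p ∧ i = p := by
    intro i; split_ifs with hc <;> simp [hc]
  have key : Finset.univ.filter (dpred X Y (n + 1) τ) =
      (Finset.univ.filter (dpred X Y n σ)).image φ ∪
        (if inc X Y n σ p then {p} else ∅) := by
    ext i
    simp only [Finset.mem_union, Finset.mem_image, Finset.mem_filter, Finset.mem_univ,
      true_and, hmem]
    constructor
    · rintro ⟨hi, hlt, hx, hy⟩
      have hIn : (i : ℕ) < n := by omega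
      rcases lt_trichotomy ((i : ℕ) + 1) (p : ℕ) with c1 | c2 | c3
      · -- both positions below p : descent of σ at i
        left
        have e0 := hvlt i (by omega)
        have e1 := hvlt ⟨(i : ℕ) + 1, hi⟩ (by simpa using c1)
        refine ⟨⟨(i : ℕ), hIn⟩, ⟨(by omega : (i : ℕ) + 1 < n), ?_, ?_, ?_⟩, ?_⟩
        · rw [e0, e1] at hlt; exact hlt
        · rw [e0] at hx; exact hx
        · rw [e1] at hy; exact hy
        · ext; simp only [hφval, Fin.val_mk]; split_ifs <;> omega
      · -- i + 1 = p : impossible, ascent to the maximum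
        exfalso
        have e0 := hvlt i (by omega)
        have e1 := hvp ⟨(i : ℕ) + 1, hi⟩ (by simpa using c2)
        rw [e0, e1] at hlt
        have := hσlt ⟨(i : ℕ), by omega⟩
        omega
      · -- i ≥ p
        rcases Nat.lt_or_ge (p : ℕ) (i : ℕ) with c4 | c4
        · -- i > p : descent of σ at i - 1
          left
          have e0 := hvgt i c4
          have e1 := hvgt ⟨(i : ℕ) + 1, hi⟩ (by simp; omega)
          have e1' : (σ ⟨((⟨(i : ℕ) + 1, hi⟩ : Fin (n + 1)) : ℕ) - 1, by omega⟩ : ℕ)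
              = (σ ⟨((i : ℕ) - 1) + 1, by omega⟩ : ℕ) := ecg _ _ _ _ (by simp; omega)
          rw [e1'] at e1
          refine ⟨⟨(i : ℕ) - 1, by omega⟩, ⟨(by omega : ((i : ℕ) - 1) + 1 < n), ?_, ?_, ?_⟩, ?_⟩
          · rw [e0, e1] at hlt; exact hlt
          · rw [e0] at hx; exact hx
          · rw [e1] at hy; exact hy
          · ext; simp only [hφval, Fin.val_mk]; split_ifs <;> omega
        · -- i = p
          have c5 : (i : ℕ) = (p : ℕ) := by omega
          have hPn : (p : ℕ) < n := by omega
          have e1 := hvgt ⟨(i : ℕ) + 1, hi⟩ (by simp; omega)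
          have e1' : (σ ⟨((⟨(i : ℕ) + 1, hi⟩ : Fin (n + 1)) : ℕ) - 1, by omega⟩ : ℕ)
              = (σ ⟨(p : ℕ), hPn⟩ : ℕ) := ecg _ _ _ _ (by simp; omega)
          rw [e1'] at e1
          rw [e1] at hy
          clear hlt hx e1 e1' hmem hvlt hvgt hvp hτ hφinj hφ
          clear_value τ
          clear τ
          by_cases c6 : 1 ≤ (p : ℕ) ∧
              (σ ⟨(p : ℕ), hPn⟩ : ℕ) < (σ ⟨(p : ℕ) - 1, by omega⟩ : ℕ) ∧
              ((σ ⟨(p : ℕ) - 1, by omega⟩ : ℕ) + 1) ∈ X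
          · -- the destroyed pair was a descent : descent of σ at p - 1
            left
            obtain ⟨hp1, hc1, hc2⟩ := c6
            refine ⟨⟨(p : ℕ) - 1, by omega⟩, ⟨(by omega : ((p : ℕ) - 1) + 1 < n), ?_, ?_, ?_⟩, ?_⟩
            · have hc1' : (σ ⟨(p : ℕ) - 1 + 1, by omega⟩ : ℕ) < (σ ⟨(p : ℕ) - 1, by omega⟩ : ℕ) := by
                rw [ecg ((p : ℕ) - 1 + 1) (p : ℕ) (by omega) hPn (by omega)]; exact hc1
              exact hc1'
            · exact hc2
            · have hy' : ((σ ⟨(p : ℕ) - 1 + 1, by omega⟩ : ℕ) + 1) ∈ Y := by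
                rw [ecg ((p : ℕ) - 1 + 1) (p : ℕ) (by omega) hPn (by omega)]; exact hy
              exact hy'
            · ext; simp only [hφval, Fin.val_mk]; split_ifs <;> omega
          · -- insertion point : inc holds and i = p
            right
            refine ⟨⟨hPn, hy, ?_⟩, Fin.ext c5⟩
            intro h1 hcon
            exact c6 ⟨h1, hcon.1, hcon.2⟩
    · rintro (⟨j, ⟨hj, hjlt, hjx, hjy⟩, rfl⟩ | ⟨hinc2, hip⟩)
      swap
      · obtain ⟨hPn, hYp, hnd⟩ := hinc2
        rw [hip]
        -- the insertion point p itself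
        have hi : (p : ℕ) + 1 < n + 1 := by omega
        have e0 := hvp p rfl
        have e1 := hvgt ⟨(p : ℕ) + 1, hi⟩ (by simp only [Fin.val_mk]; omega)
        have e1' := ecg (((⟨(p : ℕ) + 1, hi⟩ : Fin (n + 1)) : ℕ) - 1) (p : ℕ)
          (by simp only [Fin.val_mk]; omega) hPn (by simp only [Fin.val_mk]; omega)
        rw [e1'] at e1
        refine ⟨hi, ?_, ?_, ?_⟩
        · rw [e0, e1]; exact hσlt _
        · rw [e0]; exact hX1
        · rw [e1]; exact hYp
      · -- image of a σ-descent
        have hφj := hφval j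
        by_cases c1 : (j : ℕ) + 1 < (p : ℕ)
        · rw [if_pos c1] at hφj
          have hi : (φ j : ℕ) + 1 < n + 1 := by omega
          refine ⟨hi, ?_, ?_, ?_⟩
          · have e0 := hvlt (φ j) (by omega)
            have e1 := hvlt ⟨(φ j : ℕ) + 1, hi⟩ (by simp; omega)
            rw [e0, e1]
            rw [ecg ((φ j : ℕ)) (j : ℕ) (by omega) j.isLt (by omega),
              ecg (((⟨(φ j : ℕ) + 1, hi⟩ : Fin (n + 1)) : ℕ)) ((j : ℕ) + 1) (by simp; omega) hj (by simp; omega)]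
            exact hjlt
          · have e0 := hvlt (φ j) (by omega)
            rw [e0, ecg ((φ j : ℕ)) (j : ℕ) (by omega) j.isLt (by omega)]
            exact hjx
          · have e1 := hvlt ⟨(φ j : ℕ) + 1, hi⟩ (by simp; omega)
            rw [e1, ecg (((⟨(φ j : ℕ) + 1, hi⟩ : Fin (n + 1)) : ℕ)) ((j : ℕ) + 1) (by simp; omega) hj (by simp; omega)]
            exact hjy
        · rw [if_neg c1] at hφj
          have hi : (φ j : ℕ) + 1 < n + 1 := by omega
          have e1 := hvgt ⟨(φ j : ℕ) + 1, hi⟩ (by simp; omega)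
          have e1' := ecg (((⟨(φ j : ℕ) + 1, hi⟩ : Fin (n + 1)) : ℕ) - 1) ((j : ℕ) + 1)
            (by simp; omega) hj (by simp; omega)
          rw [e1'] at e1
          by_cases c2 : (j : ℕ) + 1 = (p : ℕ)
          ·
            have e0 := hvp (φ j) (by omega)
            refine ⟨hi, ?_, ?_, ?_⟩
            · rw [e0, e1]; exact lt_of_lt_of_le (hσlt _) (le_refl n)
            · rw [e0]; exact hX1
            · rw [e1]; exact hjy
          · have e0 := hvgt (φ j) (by omega)
            have e0' := ecg ((φ j : ℕ) - 1) (j : ℕ) (by omega) j.isLt (by omega)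
            rw [e0'] at e0
            refine ⟨hi, ?_, ?_, ?_⟩
            · rw [e0, e1]; exact hjlt
            · rw [e0]; exact hjx
            · rw [e1]; exact hjy
  rw [key, Finset.card_union_of_disjoint, Finset.card_image_of_injective _ hφinj]
  · congr 1
    split_ifs <;> simp
  · rw [Finset.disjoint_right]
    intro i hi himg
    rw [hmem] at hi
    obtain ⟨⟨hPn, hYp, hnd⟩, hip⟩ := hi
    simp only [Finset.mem_image, Finset.mem_filter, Finset.mem_univ, true_and] at himg
    obtain ⟨j, ⟨hj, hjlt, hjx, hjy⟩, hjp⟩ := himg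
    have hv : (φ j : ℕ) = (p : ℕ) := by rw [hjp, hip]
    rw [hφval] at hv
    split_ifs at hv
    · omega
    · -- j + 1 = p, so the pair destroyed was a descent, contradicting inc
      have h1 : 1 ≤ (p : ℕ) := by omega
      refine hnd h1 ⟨?_, ?_⟩
      · rw [ecg (p : ℕ) ((j : ℕ) + 1) hPn hj (by omega),
          ecg ((p : ℕ) - 1) (j : ℕ) (by omega) j.isLt (by omega)]
        exact hjlt
      · rw [ecg ((p : ℕ) - 1) (j : ℕ) (by omega) j.isLt (by omega)]
        exact hjx

lemma card_B (σ : Equiv.Perm (Fin n)) :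
    (Finset.univ.filter (fun j : Fin n => (σ j : ℕ) + 1 ∈ Y)).card = cnt Y n := by
  classical
  have hset : Y ∩ Set.Icc 1 n = ↑((Finset.Icc 1 n).filter (· ∈ Y)) := by
    ext x
    simp only [Set.mem_inter_iff, Set.mem_Icc, Finset.coe_filter, Finset.mem_Icc,
      Set.mem_setOf_eq]
    tauto
  rw [cnt, hset, Set.ncard_coe_finset]
  apply Finset.card_bij (fun j _ => (σ j : ℕ) + 1)
  · intro a ha
    simp only [Finset.mem_filter, Finset.mem_univ, true_and] at ha ⊢
    have := (σ a).isLt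
    exact ⟨Finset.mem_Icc.2 (by omega), ha⟩
  · intro a _ b _ hab
    have : σ a = σ b := Fin.ext (by omega)
    exact σ.injective this
  · intro b hb
    simp only [Finset.mem_filter, Finset.mem_Icc] at hb
    obtain ⟨⟨hb1, hb2⟩, hbY⟩ := hb
    refine ⟨σ.symm ⟨b - 1, by omega⟩, ?_, ?_⟩
    · simp only [Finset.mem_filter, Finset.mem_univ, true_and, Equiv.apply_symm_apply,
        Fin.val_mk]
      rwa [Nat.sub_add_cancel hb1]
    · simp only [Equiv.apply_symm_apply, Fin.val_mk]; omega

lemma card_inc_add (σ : Equiv.Perm (Fin n)) :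
    (Finset.univ.filter (fun p : Fin (n + 1) => inc X Y n σ p)).card
      + desCount X Y n σ = cnt Y n := by
  classical
  have ecg : ∀ (a b : ℕ) (ha : a < n) (hb : b < n), a = b →
      (σ ⟨a, ha⟩ : ℕ) = (σ ⟨b, hb⟩ : ℕ) := by rintro a b ha hb rfl; rfl
  rw [desCount_eq_card]
  set A' := Finset.univ.filter (fun j : Fin n => incP X Y n σ j) with hA'
  set B := Finset.univ.filter (fun j : Fin n => (σ j : ℕ) + 1 ∈ Y) with hB
  set S := Finset.univ.filter (dpred X Y n σ) with hS
  -- step a : the inc positions correspond to incP positions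
  have h1 : (Finset.univ.filter (fun p : Fin (n + 1) => inc X Y n σ p)).card = A'.card := by
    symm
    apply Finset.card_bij (fun (j : Fin n) _ => j.castSucc)
    · intro a ha
      simp only [hA', Finset.mem_filter, Finset.mem_univ, true_and] at ha ⊢
      exact ⟨by simpa using a.isLt, ha⟩
    · intro a _ b _ hab
      exact Fin.castSucc_injective _ hab
    · intro p hp
      simp only [Finset.mem_filter, Finset.mem_univ, true_and] at hp
      obtain ⟨hpn, hpP⟩ := hp
      refine ⟨⟨(p : ℕ), hpn⟩, ?_, ?_⟩
      · simp only [hA', Finset.mem_filter, Finset.mem_univ, true_and]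
        exact hpP
      · ext; simp
  -- step b : split B by incP
  have h2 : (B.filter (fun j => incP X Y n σ j)).card
      + (B.filter (fun j => ¬ incP X Y n σ j)).card = B.card :=
    Finset.card_filter_add_card_filter_not _
  have h3 : B.filter (fun j => incP X Y n σ j) = A' := by
    ext j
    simp only [hA', hB, Finset.mem_filter, Finset.mem_univ, true_and]
    constructor
    · rintro ⟨_, hj⟩; exact hj
    · intro hj; exact ⟨hj.1, hj⟩
  -- step c : the non-incP part of B is in bijection with the descents
  have h4 : S.card = (B.filter (fun j => ¬ incP X Y n σ j)).card := by
    apply Finset.card_bij (fun (i : Fin n) (hi : i ∈ S) =>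
      (⟨(i : ℕ) + 1, by
        have := (Finset.mem_filter.1 hi).2; exact this.1⟩ : Fin n))
    · intro a ha
      obtain ⟨h, hlt, hx, hy⟩ := (Finset.mem_filter.1 ha).2
      simp only [hB, Finset.mem_filter, Finset.mem_univ, true_and]
      refine ⟨hy, ?_⟩
      rintro ⟨-, hnd⟩
      exact hnd (by simp) ⟨hlt, hx⟩
    · intro a _ b _ hab
      have := congrArg Fin.val hab
      simp only [Fin.val_mk] at this
      exact Fin.ext (by omega)
    · intro j hj
      simp only [hB, Finset.mem_filter, Finset.mem_univ, true_and] at hj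
      obtain ⟨hjY, hjn⟩ := hj
      rw [incP] at hjn
      push_neg at hjn
      obtain ⟨h1', hlt', hx'⟩ := hjn hjY
      refine ⟨⟨(j : ℕ) - 1, by omega⟩, ?_, ?_⟩
      · rw [hS, Finset.mem_filter]
        refine ⟨Finset.mem_univ _, (by have := j.isLt; omega : ((j : ℕ) - 1) + 1 < n), ?_, ?_, ?_⟩
        · rw [ecg _ (j : ℕ) _ j.isLt (by simp only [Fin.val_mk]; omega)]
          exact hlt'
        · exact hx'
        · rw [ecg _ (j : ℕ) _ j.isLt (by simp only [Fin.val_mk]; omega)]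
          exact hjY
      · ext; simp only [Fin.val_mk]; omega
  have hcB : B.card = cnt Y n := by rw [hB]; exact card_B Y n σ
  rw [h3] at h2
  rw [h1]
  omega

lemma card_ins_filter (hX1 : n + 1 ∈ X) (σ : Equiv.Perm (Fin n)) (k : ℕ) :
    ((Finset.univ.filter
        (fun p : Fin (n + 1) => desCount X Y (n + 1) (ins n σ p) = k)).card : ℤ) =
      (if desCount X Y n σ + 1 = k then (cnt Y n : ℤ) - (desCount X Y n σ : ℤ) else 0) +
      (if desCount X Y n σ = k then
        ((n : ℤ) + 1) - ((cnt Y n : ℤ) - (desCount X Y n σ : ℤ)) else 0) := by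
  classical
  have hA := card_inc_add X Y n σ
  have hAle : (Finset.univ.filter (fun p : Fin (n + 1) => inc X Y n σ p)).card ≤ n + 1 := by
    calc (Finset.univ.filter (fun p : Fin (n + 1) => inc X Y n σ p)).card
        ≤ (Finset.univ : Finset (Fin (n + 1))).card := Finset.card_filter_le _ _
    _ = n + 1 := by simp
  have hcond : ∀ p : Fin (n + 1), (desCount X Y (n + 1) (ins n σ p) = k) ↔
      ((inc X Y n σ p ∧ desCount X Y n σ + 1 = k) ∨
        (¬ inc X Y n σ p ∧ desCount X Y n σ = k)) := by
    intro p
    rw [desCount_ins X Y n hX1 σ p]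
    split_ifs with hc <;> simp [hc]
  rw [Finset.filter_congr (fun p _ => hcond p)]
  rw [Finset.filter_or, Finset.card_union_of_disjoint (by
    rw [Finset.disjoint_left]
    intro a ha hb
    simp only [Finset.mem_filter] at ha hb
    exact hb.2.1 ha.2.1)]
  have e1 : Finset.univ.filter
      (fun p : Fin (n + 1) => inc X Y n σ p ∧ desCount X Y n σ + 1 = k) =
      if desCount X Y n σ + 1 = k then
        Finset.univ.filter (fun p : Fin (n + 1) => inc X Y n σ p) else ∅ := by
    split_ifs with hc <;> simp [Finset.filter_eq_empty_iff, hc]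
  have e2 : Finset.univ.filter
      (fun p : Fin (n + 1) => ¬ inc X Y n σ p ∧ desCount X Y n σ = k) =
      if desCount X Y n σ = k then
        Finset.univ.filter (fun p : Fin (n + 1) => ¬ inc X Y n σ p) else ∅ := by
    split_ifs with hc <;> simp [Finset.filter_eq_empty_iff, hc]
  have e3 : (Finset.univ.filter (fun p : Fin (n + 1) => ¬ inc X Y n σ p)).card
      = (n + 1) - (Finset.univ.filter (fun p : Fin (n + 1) => inc X Y n σ p)).card := by
    have h5 := Finset.card_filter_add_card_filter_not
      (s := (Finset.univ : Finset (Fin (n + 1))))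
      (p := fun p : Fin (n + 1) => inc X Y n σ p)
    simp only [Finset.card_univ, Fintype.card_fin] at h5
    omega
  rw [e1, e2]
  split_ifs with h1 h2 h2
  · omega
  · simp only [Finset.card_empty, add_zero]
    push_cast
    omega
  · rw [e3]
    simp only [Finset.card_empty, zero_add]
    push_cast
    omega
  · simp

lemma natCard_subtype_eq {α : Type*} [Fintype α] (P : α → Prop) [DecidablePred P] :
    Nat.card {x // P x} = (Finset.univ.filter P).card := by
  rw [Nat.card_eq_fintype_card]
  exact Fintype.card_subtype P

lemma D_eq_card (m s : ℕ) : D X Y m s =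
    (Finset.univ.filter (fun σ : Equiv.Perm (Fin m) => desCount X Y m σ = s)).card := by
  classical
  rw [D]
  exact natCard_subtype_eq (fun σ => desCount X Y m σ = s)

lemma D_succ_eq_sum (k : ℕ) :
    D X Y (n + 1) k = ∑ σ : Equiv.Perm (Fin n),
      (Finset.univ.filter
        (fun p : Fin (n + 1) => desCount X Y (n + 1) (ins n σ p) = k)).card := by
  classical
  have e : {x : Fin (n + 1) × Equiv.Perm (Fin n) //
        desCount X Y (n + 1) (ins n x.2 x.1) = k} ≃
      {σ : Equiv.Perm (Fin (n + 1)) // desCount X Y (n + 1) σ = k} :=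
    Equiv.subtypeEquiv (insEquiv n) (fun x => Iff.rfl)
  have h0 : D X Y (n + 1) k = Nat.card {x : Fin (n + 1) × Equiv.Perm (Fin n) //
      desCount X Y (n + 1) (ins n x.2 x.1) = k} := by
    rw [D]
    exact (Nat.card_congr e).symm
  rw [h0, natCard_subtype_eq]
  rw [Finset.card_filter, Fintype.sum_prod_type, Finset.sum_comm]
  refine Finset.sum_congr rfl (fun σ _ => ?_)
  rw [Finset.card_filter]

end aux

/-- Recurrence for `D_{n,k}^{X,Y}` when `n+1 ∈ X`:
`D_{n+1,k} = (y_n - (k-1)) D_{n,k-1} + (n+1 - (y_n - k)) D_{n,k}`,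
the first term being omitted when `k = 0`. -/
theorem D_rec_mem (X Y : Set ℕ) (hX : 0 ∉ X) (hY : 0 ∉ Y) (n : ℕ) (hn : 1 ≤ n)
    (h : n + 1 ∈ X) (k : ℕ) :
    (D X Y (n + 1) k : ℤ) =
      (if k = 0 then 0 else
        ((cnt Y n : ℤ) - ((k : ℤ) - 1)) * (D X Y n (k - 1) : ℤ)) +
        ((n : ℤ) + 1 - ((cnt Y n : ℤ) - (k : ℤ))) * (D X Y n k : ℤ) := by

  classical
  have h2 : (D X Y (n + 1) k : ℤ) = ∑ σ : Equiv.Perm (Fin n),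
      ((Finset.univ.filter
        (fun p : Fin (n + 1) => desCount X Y (n + 1) (ins n σ p) = k)).card : ℤ) := by
    rw [D_succ_eq_sum X Y n k]
    push_cast
    rfl
  rw [h2]
  have h3 : ∀ σ : Equiv.Perm (Fin n), ((Finset.univ.filter
      (fun p : Fin (n + 1) => desCount X Y (n + 1) (ins n σ p) = k)).card : ℤ) =
      (if desCount X Y n σ + 1 = k then (cnt Y n : ℤ) - (desCount X Y n σ : ℤ) else 0) +
      (if desCount X Y n σ = k then
        ((n : ℤ) + 1) - ((cnt Y n : ℤ) - (desCount X Y n σ : ℤ)) else 0) :=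
    fun σ => card_ins_filter X Y n h σ k
  rw [Finset.sum_congr rfl (fun σ _ => h3 σ), Finset.sum_add_distrib]
  have h4 : (∑ σ : Equiv.Perm (Fin n),
      if desCount X Y n σ + 1 = k then (cnt Y n : ℤ) - (desCount X Y n σ : ℤ) else 0) =
      (if k = 0 then 0 else
        ((cnt Y n : ℤ) - ((k : ℤ) - 1)) * (D X Y n (k - 1) : ℤ)) := by
    by_cases hk : k = 0
    · subst hk
      simp
    · rw [if_neg hk, ← Finset.sum_filter]
      have hfc : Finset.univ.filter (fun σ : Equiv.Perm (Fin n) => desCount X Y n σ + 1 = k)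
          = Finset.univ.filter (fun σ : Equiv.Perm (Fin n) => desCount X Y n σ = k - 1) := by
        apply Finset.filter_congr
        intro σ _
        constructor <;> (intro hh; omega)
      rw [Finset.sum_congr hfc (fun σ hσ => ?_), Finset.sum_const, ← D_eq_card,
        nsmul_eq_mul, mul_comm]
      have hσ' := (Finset.mem_filter.1 hσ).2
      have : (desCount X Y n σ : ℤ) = (k : ℤ) - 1 := by omega
      rw [this]
  have h5 : (∑ σ : Equiv.Perm (Fin n),
      if desCount X Y n σ = k then
        ((n : ℤ) + 1) - ((cnt Y n : ℤ) - (desCount X Y n σ : ℕ)) else 0) =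
      ((n : ℤ) + 1 - ((cnt Y n : ℤ) - (k : ℤ))) * (D X Y n k : ℤ) := by
    rw [← Finset.sum_filter]
    rw [Finset.sum_congr rfl (fun σ hσ => ?_), Finset.sum_const, ← D_eq_card,
      nsmul_eq_mul, mul_comm]
    have hσ' := (Finset.mem_filter.1 hσ).2
    have : (desCount X Y n σ : ℤ) = (k : ℤ) := by omega
    rw [this]
  rw [h4, h5]
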